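/- Let Y_1, Y_2, … be i.i.d. copies of Y with E[|Y|] < ∞, and let R ⊆ ℝ^d be measurable with ℙ(Y ∈ R) > 0 and ℙ(Y ∈ R^c) > 0. For each n let N(n) = min{m : #{i ≤ m : Y_i ∈ R} = n} be the effective sample size of aggregation sampling with n risk scenarios (which is finite almost surely). Then with probability 1, (1/(N(n) − n)) Σ_{i ≤ N(n), Y_i ∈ R^c} Y_i → E[Y | Y ∈ R^c] as n → ∞. -/

import Mathlib

open MeasureTheory Set Filter ProbabilityTheory
open scoped Classical Topology

/-- A `ℕ`-valued function starting at `0`, increasing by at most `1` at each step, and tending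
to infinity attains every value. -/
lemma step_attains (f : ℕ → ℕ) (h0 : f 0 = 0) (hstep : ∀ m, f (m + 1) ≤ f m + 1)
    (htop : Tendsto f atTop atTop) : ∀ n, ∃ m, f m = n := by
  intro n
  have hex : ∃ m, n ≤ f m := (htop.eventually_ge_atTop n).exists
  classical
  have hspec : n ≤ f (Nat.find hex) := Nat.find_spec hex
  rcases Nat.eq_zero_or_eq_succ_pred (Nat.find hex) with h | h
  · rw [h] at hspec
    exact ⟨0, by omega⟩
  · set k := Nat.find hex - 1 with hk
    have hmin : ¬ n ≤ f k := Nat.find_min hex (by omega)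
    have hs := hstep k
    have hk1 : k + 1 = Nat.find hex := by omega
    rw [← hk1] at hspec
    exact ⟨k + 1, by omega⟩

set_option maxHeartbeats 1000000 in
/-- In aggregation sampling with i.i.d. samples `Y_1, Y_2, …` of an integrable
random vector `Y`, the average of the samples falling in `Rᶜ` among the first `N(n)` samples
converges almost surely to `E[Y | Y ∈ Rᶜ]` as the number `n` of risk scenarios tends to ∞,
where `N(n)` is the first time `n` samples have landed in `R`. -/
theorem stmt_7 {d : ℕ} {Ω : Type*} [MeasurableSpace Ω]
    (P : Measure Ω) [IsProbabilityMeasure P]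
    (Y : Ω → (Fin d → ℝ)) (hY : Measurable Y) (hYint : Integrable Y P)
    -- i.i.d. copies of Y
    (Yseq : ℕ → Ω → (Fin d → ℝ)) (hYseqMeas : ∀ i, Measurable (Yseq i))
    (hIndep : iIndepFun Yseq P)
    (hIdent : ∀ i, IdentDistrib (Yseq i) Y P P)
    (R : Set (Fin d → ℝ)) (hR : MeasurableSet R)
    (hR0 : 0 < P (Y ⁻¹' R)) (hRc0 : 0 < P (Y ⁻¹' Rᶜ))
    -- effective sample size N(n): first m such that exactly n of the first m samples lie in R
    (N : ℕ → Ω → ℕ)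
    (hN : ∀ n ω, N n ω =
      sInf {m : ℕ | ((Finset.range m).filter fun i => Yseq i ω ∈ R).card = n}) :
    ∀ᵐ ω ∂P, Tendsto
      (fun n => ((N n ω - n : ℕ) : ℝ)⁻¹ •
        ∑ i ∈ (Finset.range (N n ω)).filter (fun i => Yseq i ω ∈ Rᶜ), Yseq i ω)
      atTop (nhds ((P (Y ⁻¹' Rᶜ)).toReal⁻¹ • ∫ ω' in Y ⁻¹' Rᶜ, Y ω' ∂P)) := by
  classical
  -- the functions to which we apply the strong law of large numbers
  set f : (Fin d → ℝ) → (Fin d → ℝ) := Rᶜ.indicator id with hf_def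
  have hf : Measurable f := measurable_id.indicator hR.compl
  set g : (Fin d → ℝ) → ℝ := Rᶜ.indicator 1 with hg_def
  have hg : Measurable g := measurable_one.indicator hR.compl
  set g' : (Fin d → ℝ) → ℝ := R.indicator 1 with hg'_def
  have hg' : Measurable g' := measurable_one.indicator hR
  have hfY : f ∘ Y = (Y ⁻¹' Rᶜ).indicator Y := by
    funext ω; by_cases h : Y ω ∈ R <;> simp [hf_def, Set.indicator_apply, h]
  have hgY : g ∘ Y = (Y ⁻¹' Rᶜ).indicator 1 := by
    funext ω; by_cases h : Y ω ∈ R <;> simp [hg_def, Set.indicator_apply, h]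
  have hg'Y : g' ∘ Y = (Y ⁻¹' R).indicator 1 := by
    funext ω; by_cases h : Y ω ∈ R <;> simp [hg'_def, Set.indicator_apply, h]
  -- constants
  set p : ℝ := (P (Y ⁻¹' Rᶜ)).toReal with hp_def
  set q : ℝ := (P (Y ⁻¹' R)).toReal with hq_def
  have hp0 : 0 < p := ENNReal.toReal_pos hRc0.ne' (measure_ne_top _ _)
  have hq0 : 0 < q := ENNReal.toReal_pos hR0.ne' (measure_ne_top _ _)
  -- integrability and integral computations
  have hintfY : Integrable (f ∘ Y) P := by
    rw [hfY]; exact hYint.indicator (hY hR.compl)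
  have hintgY : Integrable (g ∘ Y) P := by
    rw [hgY]
    exact (integrable_const (1 : ℝ)).indicator (hY hR.compl)
  have hintg'Y : Integrable (g' ∘ Y) P := by
    rw [hg'Y]
    exact (integrable_const (1 : ℝ)).indicator (hY hR)
  have hIfY : ∫ ω', (f ∘ Y) ω' ∂P = ∫ ω' in Y ⁻¹' Rᶜ, Y ω' ∂P := by
    rw [hfY, integral_indicator (hY hR.compl)]
  have hIgY : ∫ ω', (g ∘ Y) ω' ∂P = p := by
    rw [hgY, hp_def, integral_indicator_one (hY hR.compl)]; rfl
  have hIg'Y : ∫ ω', (g' ∘ Y) ω' ∂P = q := by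
    rw [hg'Y, hq_def, integral_indicator_one (hY hR)]; rfl
  -- strong law of large numbers applied three times
  have SLLN : ∀ (E : Type) [inst : NormedAddCommGroup E], ∀ [inst2 : NormedSpace ℝ E]
      [inst3 : CompleteSpace E] [inst4 : MeasurableSpace E] [inst5 : BorelSpace E],
      ∀ (u : (Fin d → ℝ) → E), Measurable u → Integrable (u ∘ Y) P →
      ∀ᵐ ω ∂P, Tendsto (fun n : ℕ => (n : ℝ)⁻¹ • ∑ i ∈ Finset.range n, u (Yseq i ω))
        atTop (𝓝 (∫ ω', (u ∘ Y) ω' ∂P)) := by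
    intro E _ _ _ _ _ u hu huint
    have hid : ∀ i, IdentDistrib (u ∘ Yseq i) (u ∘ Y) P P := fun i => (hIdent i).comp hu
    have h0 : IdentDistrib (u ∘ Yseq 0) (u ∘ Y) P P := hid 0
    have hint0 : Integrable (u ∘ Yseq 0) P := h0.integrable_iff.2 huint
    have hmain := strong_law_ae (μ := P) (fun i => u ∘ Yseq i) hint0
      (fun i j hij => (hIndep.indepFun hij).comp hu hu)
      (fun i => (hid i).trans h0.symm)
    have hEq : ∫ ω', u (Yseq 0 ω') ∂P = ∫ ω', u (Y ω') ∂P := h0.integral_eq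
    simpa [Function.comp, hEq] using hmain
  have hA := SLLN (Fin d → ℝ) f hf hintfY
  have hB := SLLN ℝ g hg hintgY
  have hC := SLLN ℝ g' hg' hintg'Y
  rw [hIfY] at hA
  rw [hIgY] at hB
  rw [hIg'Y] at hC
  filter_upwards [hA, hB, hC] with ω hA hB hC
  -- notation for counting functions and sums
  set Cnt : ℕ → ℕ := fun m => ((Finset.range m).filter fun i => Yseq i ω ∈ R).card with hCnt_def
  set K : ℕ → ℕ := fun m => ((Finset.range m).filter fun i => Yseq i ω ∈ Rᶜ).card with hK_def
  set S : ℕ → (Fin d → ℝ) :=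
    fun m => ∑ i ∈ (Finset.range m).filter (fun i => Yseq i ω ∈ Rᶜ), Yseq i ω with hS_def
  -- rewrite the SLLN conclusions in terms of Cnt, K, S
  have hA' : Tendsto (fun m : ℕ => (m : ℝ)⁻¹ • S m) atTop (𝓝 (∫ ω' in Y ⁻¹' Rᶜ, Y ω' ∂P)) := by
    refine hA.congr fun m => ?_
    congr 1
    rw [hS_def]
    simp only [Finset.sum_filter, hf_def, Set.indicator_apply]
    simp
  have hB' : Tendsto (fun m : ℕ => (m : ℝ)⁻¹ * (K m : ℝ)) atTop (𝓝 p) := by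
    refine hB.congr fun m => ?_
    rw [hK_def]
    simp only [smul_eq_mul, hg_def, Set.indicator_apply]
    congr 1
    rw [← Finset.sum_boole]
    simp
  have hC' : Tendsto (fun m : ℕ => (m : ℝ)⁻¹ * (Cnt m : ℝ)) atTop (𝓝 q) := by
    refine hC.congr fun m => ?_
    rw [hCnt_def]
    simp only [smul_eq_mul, hg'_def, Set.indicator_apply]
    congr 1
    rw [← Finset.sum_boole]
    simp
  -- Cnt tends to infinity
  have hCnt_top : Tendsto Cnt atTop atTop := by
    rw [← tendsto_natCast_atTop_iff (R := ℝ)]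
    have h1 : Tendsto (fun m : ℕ => (m : ℝ) * ((m : ℝ)⁻¹ * (Cnt m : ℝ))) atTop atTop :=
      tendsto_natCast_atTop_atTop.atTop_mul_pos hq0 hC'
    refine h1.congr fun m => ?_
    rcases Nat.eq_zero_or_pos m with h | h
    · simp [h, hCnt_def]
    · have : (m : ℝ) ≠ 0 := Nat.cast_ne_zero.2 h.ne'
      field_simp
  -- Cnt attains every value
  have hstep : ∀ m, Cnt (m + 1) ≤ Cnt m + 1 := by
    intro m
    rw [hCnt_def]
    simp only [Finset.range_add_one, Finset.filter_insert]
    split_ifs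
    · exact Finset.card_insert_le _ _
    · exact Nat.le_succ_of_le (le_refl _)
  have hattain : ∀ n, ∃ m, Cnt m = n :=
    step_attains Cnt (by simp [hCnt_def]) hstep hCnt_top
  -- properties of N
  have hNmem : ∀ n, Cnt (N n ω) = n := by
    intro n
    rw [hN n ω]
    exact Nat.sInf_mem (hattain n)
  have hCle : ∀ m, Cnt m ≤ m := fun m =>
    (Finset.card_filter_le _ _).trans (by simp)
  have hNge : ∀ n, n ≤ N n ω := by
    intro n
    have h1 := hNmem n
    have h2 := hCle (N n ω)
    omega
  have hNtop : Tendsto (fun n => N n ω) atTop atTop :=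
    tendsto_atTop_mono hNge tendsto_id
  -- K m + Cnt m = m
  have hKC : ∀ m, Cnt m + K m = m := by
    intro m
    have h1 := Finset.card_filter_add_card_filter_not
      (s := Finset.range m) (p := fun i => Yseq i ω ∈ R)
    simp only [Finset.card_range] at h1
    have h2 : (Finset.filter (fun i => Yseq i ω ∈ Rᶜ) (Finset.range m)) =
        (Finset.filter (fun i => ¬ Yseq i ω ∈ R) (Finset.range m)) := by
      apply Finset.filter_congr
      intro i _
      simp [Set.mem_compl_iff]
    rw [hK_def, hCnt_def]
    simp only [h2]
    omega
  have hKN : ∀ n, K (N n ω) = N n ω - n := by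
    intro n
    have := hKC (N n ω)
    rw [hNmem n] at this
    omega
  -- auxiliary convergence
  have hAN : Tendsto (fun n => ((N n ω : ℝ))⁻¹ • S (N n ω)) atTop
      (𝓝 (∫ ω' in Y ⁻¹' Rᶜ, Y ω' ∂P)) := hA'.comp hNtop
  have hBN : Tendsto (fun n => ((N n ω : ℝ))⁻¹ * (K (N n ω) : ℝ)) atTop (𝓝 p) := hB'.comp hNtop
  have hmain : Tendsto (fun n => (((N n ω : ℝ))⁻¹ * (K (N n ω) : ℝ))⁻¹ •
      (((N n ω : ℝ))⁻¹ • S (N n ω))) atTop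
      (𝓝 (p⁻¹ • ∫ ω' in Y ⁻¹' Rᶜ, Y ω' ∂P)) :=
    (hBN.inv₀ hp0.ne').smul hAN
  refine hmain.congr' ?_
  filter_upwards [eventually_ge_atTop 1] with n hn
  have hm1 : 1 ≤ N n ω := le_trans hn (hNge n)
  have hm : ((N n ω : ℝ)) ≠ 0 := Nat.cast_ne_zero.2 (by omega)
  rw [smul_smul]
  have hval : ((N n ω - n : ℕ) : ℝ) = (K (N n ω) : ℝ) := by rw [hKN n]
  have hSval : S (N n ω) =
      ∑ i ∈ (Finset.range (N n ω)).filter (fun i => Yseq i ω ∈ Rᶜ), Yseq i ω := rfl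
  rw [← hSval, hval]
  congr 1
  rw [mul_inv, inv_inv]
  rw [mul_comm ((N n ω : ℝ)) _, mul_assoc, mul_inv_cancel₀ hm, mul_one]
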